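/- Superlinearity of the action: assume L(t,x,v) ≥ α(|v|)·|v| for a nonnegative nondecreasing function α with α(r) → ∞ as r → ∞, and L ≥ 0. Define A_T^t(x,y) = inf over absolutely continuous γ with γ(0)=x, γ(t)=y of ∫_0^t L(T+s, γ(s), γ'(s)) ds. Then A_T^t(x,y) ≥ α(|x−y|/(2t)) · |x−y|/2. -/

import Mathlib

open MeasureTheory

/-- Superlinearity of the action: if `L ≥ 0` and `L(s,x,v) ≥ α(‖v‖)·‖v‖` with `α`
nonnegative, nondecreasing and tending to `∞`, then the minimal action
`A_T^t(x,y)` over absolutely continuous curves from `x` to `y` in time `t`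
satisfies `A_T^t(x,y) ≥ α(‖x−y‖/(2t)) · ‖x−y‖/2`. -/
theorem action_superlinear (n : ℕ) (L : ℝ → (Fin n → ℝ) → (Fin n → ℝ) → ℝ)
    (hLc : Continuous fun p : ℝ × (Fin n → ℝ) × (Fin n → ℝ) => L p.1 p.2.1 p.2.2)
    (α : ℝ → ℝ) (hα0 : ∀ r, 0 ≤ α r) (hαmono : Monotone α)
    (hαtop : Filter.Tendsto α Filter.atTop Filter.atTop)
    (hsup : ∀ (s : ℝ) (x v : Fin n → ℝ), α ‖v‖ * ‖v‖ ≤ L s x v)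
    (hL0 : ∀ (s : ℝ) (x v : Fin n → ℝ), 0 ≤ L s x v)
    (T t : ℝ) (ht : 0 < t) (x y : Fin n → ℝ) :
    α (‖x - y‖ / (2 * t)) * (‖x - y‖ / 2) ≤
      sInf {r : ℝ | ∃ γ d : ℝ → (Fin n → ℝ),
        γ 0 = x ∧ γ t = y ∧
        (∀ s1 ∈ Set.Icc (0 : ℝ) t, ∀ s2 ∈ Set.Icc (0 : ℝ) t, s1 ≤ s2 →
          γ s2 - γ s1 = ∫ s in s1..s2, d s) ∧
        IntervalIntegrable d volume 0 t ∧
        IntervalIntegrable (fun s => L (T + s) (γ s) (d s)) volume 0 t ∧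
        r = ∫ s in (0 : ℝ)..t, L (T + s) (γ s) (d s)} := by
  set c : ℝ := ‖x - y‖ / (2 * t) with hc
  have hc0 : 0 ≤ c := div_nonneg (norm_nonneg _) (by linarith)
  have hct : c * t = ‖x - y‖ / 2 := by
    field_simp [hc]
    rw [hc, div_mul_eq_mul_div, div_mul_eq_mul_div, div_eq_iff (by positivity)]
    ring
  apply le_csInf
  · -- nonempty: the straight line
    refine ⟨_, fun s => x + (s / t) • (y - x), fun _ => t⁻¹ • (y - x), by simp,
      by simp [div_self ht.ne'], ?_, ?_, ?_, rfl⟩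
    · intro s1 _ s2 _ _
      rw [intervalIntegral.integral_const]
      rw [show ((s2 - s1) • (t⁻¹ • (y - x))) = (s2/t - s1/t) • (y - x) by
        rw [smul_smul]; congr 1; field_simp]
      module
    · exact intervalIntegrable_const
    · have hcont : Continuous fun s : ℝ =>
          ((T + s, x + (s / t) • (y - x), t⁻¹ • (y - x)) : ℝ × (Fin n → ℝ) × (Fin n → ℝ)) := by
        fun_prop
      exact (hLc.comp hcont).intervalIntegrable 0 t
  · rintro r ⟨γ, d, hγ0, hγt, hFTC, hd, hLint, rfl⟩
    set μ : Measure ℝ := volume.restrict (Set.Ioc 0 t) with hμ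
    have hdμ : Integrable d μ :=
      (intervalIntegrable_iff_integrableOn_Ioc_of_le ht.le).mp hd
    have hfμ : Integrable (fun s => L (T + s) (γ s) (d s)) μ :=
      (intervalIntegrable_iff_integrableOn_Ioc_of_le ht.le).mp hLint
    have hg : Integrable (fun s => ‖d s‖) μ := hdμ.norm
    have hgc : Integrable (fun s => ‖d s‖ - c) μ := hg.sub (integrable_const c)
    have hmax : Integrable (fun s => max (‖d s‖ - c) 0) μ := hgc.pos_part
    have hh : Integrable (fun s => α c * max (‖d s‖ - c) 0) μ := hmax.const_mul _
    -- total displacement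
    have hdisp : y - x = ∫ s, d s ∂μ := by
      have := hFTC 0 ⟨le_refl 0, ht.le⟩ t ⟨ht.le, le_refl t⟩ ht.le
      rw [hγ0, hγt] at this
      rw [this, intervalIntegral.integral_of_le ht.le]
    have hμuniv : (μ Set.univ).toReal = t := by
      simp [hμ, Real.volume_Ioc, ENNReal.toReal_ofReal ht.le]
    have hintg : ‖x - y‖ ≤ ∫ s, ‖d s‖ ∂μ := by
      calc ‖x - y‖ = ‖y - x‖ := by rw [norm_sub_rev]
        _ = ‖∫ s, d s ∂μ‖ := by rw [hdisp]
        _ ≤ ∫ s, ‖d s‖ ∂μ := norm_integral_le_integral_norm _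
    -- pointwise bound
    have hpt : ∀ s, α c * max (‖d s‖ - c) 0 ≤ L (T + s) (γ s) (d s) := by
      intro s
      rcases le_or_gt c ‖d s‖ with h | h
      · calc α c * max (‖d s‖ - c) 0 ≤ α c * ‖d s‖ := by
              apply mul_le_mul_of_nonneg_left _ (hα0 c)
              exact max_le (by linarith) (norm_nonneg _)
          _ ≤ α ‖d s‖ * ‖d s‖ :=
              mul_le_mul_of_nonneg_right (hαmono h) (norm_nonneg _)
          _ ≤ L (T + s) (γ s) (d s) := hsup _ _ _
      · rw [max_eq_right (by linarith), mul_zero]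
        exact hL0 _ _ _
    have key : α c * max (‖x - y‖ / 2) 0 ≤ ∫ s, L (T + s) (γ s) (d s) ∂μ := by
      calc α c * max (‖x - y‖ / 2) 0
          ≤ α c * ∫ s, max (‖d s‖ - c) 0 ∂μ := by
            apply mul_le_mul_of_nonneg_left _ (hα0 c)
            have h1 : ∫ s, (‖d s‖ - c) ∂μ ≤ ∫ s, max (‖d s‖ - c) 0 ∂μ :=
              integral_mono hgc hmax fun s => le_max_left _ _
            have h2 : ∫ s, (‖d s‖ - c) ∂μ = (∫ s, ‖d s‖ ∂μ) - c * t := by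
              rw [integral_sub hg (integrable_const c), integral_const, measureReal_def, hμuniv,
                smul_eq_mul, mul_comm]
            have h3 : (0:ℝ) ≤ ∫ s, max (‖d s‖ - c) 0 ∂μ :=
              integral_nonneg fun s => le_max_right _ _
            rw [h2] at h1
            exact max_le (by linarith) h3
        _ = ∫ s, α c * max (‖d s‖ - c) 0 ∂μ := (integral_const_mul _ _).symm
        _ ≤ ∫ s, L (T + s) (γ s) (d s) ∂μ := integral_mono hh hfμ hpt
    have hrw : (∫ s in (0:ℝ)..t, L (T + s) (γ s) (d s)) =
        ∫ s, L (T + s) (γ s) (d s) ∂μ := intervalIntegral.integral_of_le ht.le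
    rw [hrw]
    calc α c * (‖x - y‖ / 2) ≤ α c * max (‖x - y‖ / 2) 0 := by
          apply mul_le_mul_of_nonneg_left (le_max_left _ _) (hα0 c)
      _ ≤ _ := key
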